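/- arXiv:2106.00047 — 2 statements merged into one kernel-verified Lean document; each statement's English description precedes it below -/
import Mathlib

section
/- Let μ_d denote the standard Gaussian measure on ℝ^d and σ(t) = max(t, 0) the ReLU function. For every v, x ∈ ℝ^d, ∫_{ℝ^d} 2 (wᵀv) σ(wᵀx) dμ_d(w) = vᵀx. -/
open MeasureTheory ProbabilityTheory
open Real

noncomputable section

lemma pdf_form : gaussianPDFReal 0 1 = fun x => (Real.sqrt (2*Real.pi))⁻¹ * Real.exp (-(1/2) * x^2) := by
  funext y
  unfold gaussianPDFReal
  norm_num
  ring_nf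
  exact Or.inl trivial

lemma integral_gauss_eq (f : ℝ → ℝ) :
    ∫ x, f x ∂gaussianReal 0 1 = ∫ x, gaussianPDFReal 0 1 x * f x := by
  rw [gaussianReal_of_var_ne_zero 0 one_ne_zero]
  have h : gaussianPDF 0 1 = fun x => ((gaussianPDFReal 0 1 x).toNNReal : ENNReal) := rfl
  rw [h, integral_withDensity_eq_integral_smul (measurable_gaussianPDFReal 0 1).real_toNNReal]
  congr 1
  funext x
  rw [NNReal.smul_def, smul_eq_mul, Real.coe_toNNReal _ (gaussianPDFReal_nonneg 0 1 x)]

lemma integrable_gauss_of (f : ℝ → ℝ)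
    (h : Integrable (fun x => f x * gaussianPDFReal 0 1 x)) :
    Integrable f (gaussianReal 0 1) := by
  rw [gaussianReal_of_var_ne_zero 0 one_ne_zero,
    integrable_withDensity_iff (measurable_gaussianPDF 0 1)
      (ae_of_all _ fun x => ENNReal.ofReal_lt_top)]
  convert h using 2 with x
  · rfl
  rw [gaussianPDF, ENNReal.toReal_ofReal (gaussianPDFReal_nonneg 0 1 x)]

lemma sq_exp_bound (x : ℝ) : x^2 * Real.exp (-(1/2) * x^2) ≤ 4 * Real.exp (-(1/4) * x^2) := by
  have h1 : (1/4) * x^2 + 1 ≤ Real.exp ((1/4) * x^2) := Real.add_one_le_exp _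
  have h2 : Real.exp (-(1/2) * x^2) = Real.exp (-(1/4) * x^2) * Real.exp (-(1/4) * x^2) := by
    rw [← Real.exp_add]; ring_nf
  have h3 : Real.exp (-(1/4) * x^2) * Real.exp ((1/4) * x^2) = 1 := by
    rw [← Real.exp_add]; ring_nf; exact Real.exp_zero
  have hF : 0 < Real.exp (-(1/4) * x^2) := Real.exp_pos _
  have h4 : x^2 * Real.exp (-(1/4) * x^2) ≤ 4 := by nlinarith [Real.exp_pos ((1/4) * x^2)]
  calc x^2 * Real.exp (-(1/2) * x^2)
      = (x^2 * Real.exp (-(1/4) * x^2)) * Real.exp (-(1/4) * x^2) := by rw [h2]; ring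
    _ ≤ 4 * Real.exp (-(1/4) * x^2) := by nlinarith

lemma integrable_sq_exp : Integrable (fun x : ℝ => x^2 * Real.exp (-(1/2) * x^2)) := by
  apply Integrable.mono' ((integrable_exp_neg_mul_sq (b := (1/4 : ℝ)) (by norm_num)).const_mul 4)
  · exact Continuous.aestronglyMeasurable (by fun_prop)
  · refine ae_of_all _ fun x => ?_
    rw [Real.norm_eq_abs, abs_of_nonneg (by positivity)]
    exact sq_exp_bound x

lemma integral_sq_exp : ∫ x : ℝ, x^2 * Real.exp (-(1/2) * x^2) = Real.sqrt (2 * Real.pi) := by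
  have hv : ∀ y : ℝ, HasDerivAt (fun x : ℝ => -Real.exp (-(1/2) * x^2))
      (y * Real.exp (-(1/2) * y^2)) y := by
    intro y
    have h1 : HasDerivAt (fun x : ℝ => -(1/2) * x^2) (-(1/2) * (2 * y^1)) y :=
      (hasDerivAt_pow 2 y).const_mul _
    have h2 := (h1.exp).neg
    convert h2 using 1
    · rfl
    · rfl
    · rfl
    · ring
  have hu : ∀ y : ℝ, HasDerivAt (fun x : ℝ => x) (1 : ℝ) y := fun y => hasDerivAt_id y
  have key := integral_mul_deriv_eq_deriv_mul_of_integrable (fun y _ => hu y) (fun y _ => hv y)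
    (by
      exact integrable_sq_exp.congr (ae_of_all _ fun x => by simp [Pi.mul_apply]; ring))
    (by
      exact ((integrable_exp_neg_mul_sq (b := (1/2:ℝ)) (by norm_num)).neg).congr
        (ae_of_all _ fun x => by simp [Pi.mul_apply]))
    (by
      exact ((integrable_mul_exp_neg_mul_sq (b := (1/2:ℝ)) (by norm_num)).neg).congr
        (ae_of_all _ fun x => by simp [Pi.mul_apply]))
  have h2 : ∫ x : ℝ, x * (x * Real.exp (-(1/2) * x^2)) = ∫ x : ℝ, x^2 * Real.exp (-(1/2) * x^2) := by
    congr 1; funext x; ring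
  have h3 : ∫ x : ℝ, (1:ℝ) * (-Real.exp (-(1/2) * x^2)) = -∫ x : ℝ, Real.exp (-(1/2) * x^2) := by
    rw [← integral_neg]; congr 1; funext x; ring
  rw [h2, h3] at key
  rw [key, integral_gaussian]
  rw [neg_neg]
  congr 1
  rw [div_div_eq_mul_div, div_eq_iff (by norm_num)]
  ring

lemma sqrt_two_pi_pos : (0:ℝ) < Real.sqrt (2 * Real.pi) :=
  Real.sqrt_pos.mpr (by positivity)

lemma integrable_id_gauss : Integrable (fun x : ℝ => x) (gaussianReal 0 1) := by
  apply integrable_gauss_of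
  rw [pdf_form]
  have h := (integrable_mul_exp_neg_mul_sq (b := (1/2:ℝ)) (by norm_num)).const_mul
    (Real.sqrt (2*Real.pi))⁻¹
  exact h.congr (ae_of_all _ fun x => by simp; ring)

lemma integrable_sq_gauss : Integrable (fun x : ℝ => x^2) (gaussianReal 0 1) := by
  apply integrable_gauss_of
  rw [pdf_form]
  have h := integrable_sq_exp.const_mul (Real.sqrt (2*Real.pi))⁻¹
  exact h.congr (ae_of_all _ fun x => by simp; ring)

lemma integrable_const_gauss (c : ℝ) : Integrable (fun _ : ℝ => c) (gaussianReal 0 1) :=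
  integrable_const c

lemma integral_id_gauss : ∫ x, x ∂gaussianReal 0 1 = 0 := by
  rw [integral_gauss_eq, pdf_form]
  have hodd : ∀ x : ℝ, ((Real.sqrt (2*Real.pi))⁻¹ * Real.exp (-(1/2) * (-x)^2)) * (-x)
      = -(((Real.sqrt (2*Real.pi))⁻¹ * Real.exp (-(1/2) * x^2)) * x) := by
    intro x; ring_nf
  have h := integral_neg_eq_self (fun x : ℝ => (Real.sqrt (2*Real.pi))⁻¹ * Real.exp (-(1/2) * x^2) * x) (volume : Measure ℝ)
  rw [show (fun x : ℝ => (Real.sqrt (2*Real.pi))⁻¹ * Real.exp (-(1/2) * (-x)^2) * (-x))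
      = fun x : ℝ => -((Real.sqrt (2*Real.pi))⁻¹ * Real.exp (-(1/2) * x^2) * x) from funext hodd,
    integral_neg] at h
  linarith [h]

lemma integral_sq_gauss : ∫ x, x^2 ∂gaussianReal 0 1 = 1 := by
  rw [integral_gauss_eq, pdf_form]
  have : ∀ x : ℝ, (Real.sqrt (2*Real.pi))⁻¹ * Real.exp (-(1/2) * x^2) * x^2
      = (Real.sqrt (2*Real.pi))⁻¹ * (x^2 * Real.exp (-(1/2) * x^2)) := fun x => by ring
  rw [funext this, MeasureTheory.integral_const_mul, integral_sq_exp,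
    inv_mul_cancel₀ (ne_of_gt sqrt_two_pi_pos)]

lemma gauss_map_neg : (gaussianReal 0 1).map (fun x : ℝ => -x) = gaussianReal 0 1 := by
  have h := gaussianReal_map_const_mul (μ := 0) (v := 1) (-1)
  have h2 : (fun x : ℝ => -1 * x) = fun x : ℝ => -x := by funext x; ring
  rw [h2] at h
  rw [h]
  norm_num

section PiLemmas

variable (d : ℕ)

private def gk (i j k : Fin d) : ℝ → ℝ :=
  fun t => (if k = i then t else 1) * (if k = j then t else 1)

lemma gk_prod (i j : Fin d) (w : Fin d → ℝ) : (∏ k, gk d i j k (w k)) = w i * w j := by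
  classical
  unfold gk
  rw [Finset.prod_mul_distrib]
  simp [Finset.prod_ite_eq']

lemma gk_integrable (i j k : Fin d) : Integrable (gk d i j k) (gaussianReal 0 1) := by
  unfold gk
  by_cases hki : k = i
  · by_cases hkj : k = j
    · simp only [if_pos hki, if_pos hkj]
      exact integrable_sq_gauss.congr (ae_of_all _ fun t => by ring)
    · simp only [if_pos hki, if_neg hkj]
      exact integrable_id_gauss.congr (ae_of_all _ fun t => by ring)
  · by_cases hkj : k = j
    · simp only [if_neg hki, if_pos hkj]
      exact integrable_id_gauss.congr (ae_of_all _ fun t => by ring)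
    · simp only [if_neg hki, if_neg hkj]
      exact (integrable_const (1:ℝ)).congr (ae_of_all _ fun t => by ring)

lemma gk_integral (i j k : Fin d) : ∫ t, gk d i j k t ∂gaussianReal 0 1
    = if k = i then (if i = j then 1 else 0) else if k = j then 0 else 1 := by
  unfold gk
  by_cases hki : k = i
  · by_cases hkj : k = j
    · have hij : i = j := hki ▸ hkj
      simp only [if_pos hki, if_pos hkj, if_pos hij]
      have : (fun t : ℝ => t * t) = fun t : ℝ => t ^ 2 := by funext t; ring
      rw [show (∫ t, (fun t : ℝ => t * t) t ∂gaussianReal 0 1)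
          = ∫ t, t ^ 2 ∂gaussianReal 0 1 from by rw [this]]
      exact integral_sq_gauss
    · have hij : ¬ i = j := fun h => hkj (hki.trans h)
      simp only [if_pos hki, if_neg hkj, if_neg hij, mul_one]
      exact integral_id_gauss
  · by_cases hkj : k = j
    · simp only [if_neg hki, if_pos hkj, one_mul]
      exact integral_id_gauss
    · simp only [if_neg hki, if_neg hkj, mul_one]
      simp

lemma integrable_coord_prod (i j : Fin d) :
    Integrable (fun w : Fin d → ℝ => w i * w j)
      (Measure.pi fun _ : Fin d => gaussianReal 0 1) := by
  letI : MeasureSpace ℝ := ⟨gaussianReal 0 1⟩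
  haveI : SigmaFinite (volume : Measure ℝ) := inferInstanceAs (SigmaFinite (gaussianReal 0 1))
  have h : Integrable (fun w : Fin d → ℝ => ∏ k, gk d i j k (w k)) (volume : Measure (Fin d → ℝ)) :=
    Integrable.fintype_prod (f := gk d i j) (fun k => gk_integrable d i j k)
  exact h.congr (ae_of_all _ fun w => gk_prod d i j w)

lemma integral_coord_prod (i j : Fin d) :
    ∫ w : Fin d → ℝ, w i * w j ∂(Measure.pi fun _ : Fin d => gaussianReal 0 1)
      = if i = j then 1 else 0 := by
  classical
  letI : MeasureSpace ℝ := ⟨gaussianReal 0 1⟩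
  haveI : SigmaFinite (volume : Measure ℝ) := inferInstanceAs (SigmaFinite (gaussianReal 0 1))
  have hμ : (Measure.pi fun _ : Fin d => gaussianReal 0 1) = (volume : Measure (Fin d → ℝ)) := rfl
  rw [hμ, show (fun w : Fin d → ℝ => w i * w j)
      = fun w : Fin d → ℝ => ∏ k, gk d i j k (w k) from funext fun w => (gk_prod d i j w).symm]
  rw [show (volume : Measure (Fin d → ℝ)) = Measure.pi fun _ => volume from rfl,
    MeasureTheory.integral_fintype_prod_eq_prod (gk d i j)]
  have hval : ∀ k : Fin d, (∫ x : ℝ, gk d i j k x)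
      = if k = i then (if i = j then 1 else 0) else if k = j then 0 else 1 :=
    fun k => gk_integral d i j k
  rw [Finset.prod_congr rfl fun k _ => hval k]
  by_cases hij : i = j
  · subst hij
    rw [if_pos rfl]
    apply Finset.prod_eq_one
    intro k _
    by_cases hki : k = i
    · simp [hki]
    · simp [hki]
  · rw [Finset.prod_eq_zero (Finset.mem_univ i)]
    · simp [hij]
    · simp [hij]

end PiLemmas

lemma pi_map_neg (d : ℕ) :
    (Measure.pi fun _ : Fin d => gaussianReal 0 1).map (fun w : Fin d → ℝ => -w)
      = Measure.pi fun _ : Fin d => gaussianReal 0 1 := by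
  have hmeas : Measurable (fun w : Fin d → ℝ => -w) :=
    measurable_pi_lambda _ fun i => (measurable_pi_apply i).neg
  refine (Measure.pi_eq (μ := fun _ : Fin d => gaussianReal 0 1) fun s hs => ?_).symm
  rw [Measure.map_apply hmeas (MeasurableSet.univ_pi hs)]
  have hpre : (fun w : Fin d → ℝ => -w) ⁻¹' (Set.pi Set.univ s)
      = Set.pi Set.univ fun i => (fun x : ℝ => -x) ⁻¹' s i := by
    ext w
    simp
  rw [hpre, Measure.pi_pi]
  refine Finset.prod_congr rfl fun i _ => ?_
  conv_rhs => rw [← gauss_map_neg]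
  rw [Measure.map_apply measurable_neg (hs i)]

end

/-- For the standard Gaussian measure on ℝ^d and ReLU σ(t)=max(t,0):
    ∫ 2(wᵀv)σ(wᵀx) dμ_d(w) = vᵀx. -/
theorem stmt_0 (d : ℕ) (v x : Fin d → ℝ) :
    ∫ w : Fin d → ℝ, 2 * (∑ i, w i * v i) * max (∑ i, w i * x i) 0
      ∂(Measure.pi fun _ : Fin d => gaussianReal 0 1)
    = ∑ i, v i * x i := by
  classical
  set μp : Measure (Fin d → ℝ) := Measure.pi fun _ : Fin d => gaussianReal 0 1 with hμp
  set A : (Fin d → ℝ) → ℝ := fun w => ∑ i, w i * v i with hA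
  set B : (Fin d → ℝ) → ℝ := fun w => ∑ i, w i * x i with hB
  have hmA : Measurable A :=
    Finset.measurable_sum Finset.univ fun i _ => (measurable_pi_apply (X := fun _ : Fin d => ℝ) i).mul_const (v i)
  have hmB : Measurable B :=
    Finset.measurable_sum Finset.univ fun i _ => (measurable_pi_apply (X := fun _ : Fin d => ℝ) i).mul_const (x i)
  have hexp : (fun w => A w * B w) = fun w => ∑ i, ∑ j, (v i * x j) * (w i * w j) := by
    funext w
    rw [hA, hB, Finset.sum_mul_sum]
    exact Finset.sum_congr rfl fun i _ => Finset.sum_congr rfl fun j _ => by ring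
  have hab : Integrable (fun w => A w * B w) μp := by
    rw [hexp]
    exact integrable_finset_sum _ fun i _ => integrable_finset_sum _ fun j _ =>
      ((integrable_coord_prod d i j).const_mul _)
  have habs : Integrable (fun w => A w * |B w|) μp := by
    have h := hab.abs
    have heq : (fun w => |A w * B w|) = fun w => ‖A w * |B w|‖ := by
      funext w
      rw [Real.norm_eq_abs, abs_mul, abs_mul, abs_abs]
    rw [heq] at h
    exact (integrable_norm_iff (hmA.mul hmB.abs).aestronglyMeasurable).mp h
  have hintAB : ∫ w, A w * B w ∂μp = ∑ i, v i * x i := by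
    rw [hexp]
    rw [integral_finset_sum _ fun i _ => integrable_finset_sum _ fun j _ =>
      ((integrable_coord_prod d i j).const_mul _)]
    have : ∀ i ∈ Finset.univ, (∫ w, ∑ j, (v i * x j) * (w i * w j) ∂μp)
        = ∑ j, (v i * x j) * (if i = j then (1:ℝ) else 0) := by
      intro i _
      rw [integral_finset_sum _ fun j _ => ((integrable_coord_prod d i j).const_mul _)]
      exact Finset.sum_congr rfl fun j _ => by
        rw [MeasureTheory.integral_const_mul, integral_coord_prod]
    rw [Finset.sum_congr rfl this]
    simp [mul_ite, Finset.sum_ite_eq]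
  have hintAbs : ∫ w, A w * |B w| ∂μp = 0 := by
    have hmeasneg : Measurable (fun w : Fin d → ℝ => -w) :=
      measurable_pi_lambda _ fun i => (measurable_pi_apply i).neg
    have hMP : MeasurePreserving (fun w : Fin d → ℝ => -w) μp μp := ⟨hmeasneg, pi_map_neg d⟩
    have hemb : MeasurableEmbedding (fun w : Fin d → ℝ => -w) :=
      (MeasurableEquiv.neg (Fin d → ℝ)).measurableEmbedding
    have h1 : ∫ w, A (-w) * |B (-w)| ∂μp = ∫ w, A w * |B w| ∂μp :=
      hMP.integral_comp hemb (fun w => A w * |B w|)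
    have h2 : (fun w : Fin d → ℝ => A (-w) * |B (-w)|) = fun w => -(A w * |B w|) := by
      funext w
      have hAneg : A (-w) = -A w := by
        rw [hA]
        simp only [Pi.neg_apply, neg_mul]
        rw [← Finset.sum_neg_distrib]
      have hBneg : B (-w) = -B w := by
        rw [hB]
        simp only [Pi.neg_apply, neg_mul]
        rw [← Finset.sum_neg_distrib]
      rw [hAneg, hBneg, abs_neg]
      ring
    rw [h2, integral_neg] at h1
    linarith [h1]
  have hpt : (fun w : Fin d → ℝ => 2 * A w * max (B w) 0)
      = fun w => A w * B w + A w * |B w| := by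
    funext w
    rcases le_total 0 (B w) with h | h
    · rw [max_eq_left h, abs_of_nonneg h]
      ring
    · rw [max_eq_right h, abs_of_nonpos h]
      ring
  calc ∫ w, 2 * A w * max (B w) 0 ∂μp
      = ∫ w, (A w * B w + A w * |B w|) ∂μp := by rw [hpt]
    _ = (∫ w, A w * B w ∂μp) + ∫ w, A w * |B w| ∂μp := integral_add hab habs
    _ = ∑ i, v i * x i := by rw [hintAB, hintAbs, add_zero]
end

section
/- Let μ_d^β denote the Gaussian measure N(0, β²I) on ℝ^d for β > 0 and σ the ReLU. For every v, x ∈ ℝ^d, ∫_{ℝ^d} (wᵀv) σ(wᵀx) dμ_d^β(w) = (β²/2) vᵀx. -/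
open MeasureTheory ProbabilityTheory Real Filter Set
open scoped NNReal ENNReal

-- 1D real gaussian integrals
lemma aux_tendsto_exp {b : ℝ} (hb : 0 < b) :
    Tendsto (fun x : ℝ => rexp (-b * x ^ 2)) atTop (nhds 0) := by
  have h1 : Tendsto (fun x : ℝ => b * x ^ 2) atTop atTop :=
    (tendsto_pow_atTop (n := 2) two_ne_zero).const_mul_atTop hb
  have := Real.tendsto_exp_neg_atTop_nhds_zero.comp h1
  simpa [Function.comp_def, neg_mul] using this

lemma aux_tendsto_mul_exp {b : ℝ} (hb : 0 < b) :
    Tendsto (fun x : ℝ => x * rexp (-b * x ^ 2)) atTop (nhds 0) := by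
  have h := rpow_mul_exp_neg_mul_sq_isLittleO_exp_neg hb 1
  simp_rw [rpow_one] at h
  refine h.trans_tendsto ?_
  have h1 : Tendsto (fun x : ℝ => (1/2 : ℝ) * x) atTop atTop :=
    tendsto_id.const_mul_atTop (by norm_num)
  have := Real.tendsto_exp_neg_atTop_nhds_zero.comp h1
  simpa [Function.comp_def, neg_mul] using this

lemma aux_int_odd {b : ℝ} (hb : 0 < b) :
    ∫ x : ℝ, x * rexp (-b * x ^ 2) = 0 := by
  have hderiv : ∀ y : ℝ, HasDerivAt (fun x : ℝ => -(2*b)⁻¹ * rexp (-b * x ^ 2))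
      (y * rexp (-b * y ^ 2)) y := by
    intro y
    have h1 : HasDerivAt (fun x : ℝ => -b * x ^ 2) (-b * (2 * y)) y := by
      simpa using ((hasDerivAt_pow 2 y).const_mul (-b))
    have h2 := (h1.exp).const_mul (-(2*b)⁻¹)
    refine h2.congr_deriv ?_
    field_simp
  have htop : Tendsto (fun x : ℝ => -(2*b)⁻¹ * rexp (-b * x ^ 2)) atTop (nhds 0) := by
    simpa using (aux_tendsto_exp hb).const_mul (-(2*b)⁻¹)
  have hbot : Tendsto (fun x : ℝ => -(2*b)⁻¹ * rexp (-b * x ^ 2)) atBot (nhds 0) := by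
    have := htop.comp tendsto_neg_atBot_atTop
    simpa [Function.comp_def, neg_sq] using this
  have := MeasureTheory.integral_of_hasDerivAt_of_tendsto hderiv
    (integrable_mul_exp_neg_mul_sq hb) hbot htop
  simpa using this

lemma aux_integrable_sq_exp {b : ℝ} (hb : 0 < b) :
    Integrable (fun x : ℝ => x ^ 2 * rexp (-b * x ^ 2)) := by
  have := integrable_rpow_mul_exp_neg_mul_sq hb (s := 2) (by norm_num)
  simpa [Real.rpow_two] using this

lemma aux_int_sq {b : ℝ} (hb : 0 < b) :
    ∫ x : ℝ, x ^ 2 * rexp (-b * x ^ 2) = (2*b)⁻¹ * √(π / b) := by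
  have hderiv : ∀ y : ℝ, HasDerivAt (fun x : ℝ => x * rexp (-b * x ^ 2))
      (rexp (-b * y ^ 2) - 2*b*(y ^ 2 * rexp (-b * y ^ 2))) y := by
    intro y
    have h1 : HasDerivAt (fun x : ℝ => -b * x ^ 2) (-b * (2 * y)) y := by
      simpa using ((hasDerivAt_pow 2 y).const_mul (-b))
    have h2 := (hasDerivAt_id y).mul h1.exp
    refine h2.congr_deriv ?_
    simp only [id]
    ring
  have hint : Integrable (fun y : ℝ =>
      rexp (-b * y ^ 2) - 2*b*(y ^ 2 * rexp (-b * y ^ 2))) :=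
    (integrable_exp_neg_mul_sq hb).sub ((aux_integrable_sq_exp hb).const_mul _)
  have hbot : Tendsto (fun x : ℝ => x * rexp (-b * x ^ 2)) atBot (nhds 0) := by
    have := (aux_tendsto_mul_exp hb).comp tendsto_neg_atBot_atTop
    have h2 := this.neg
    simpa [Function.comp_def, neg_sq] using h2
  have key := MeasureTheory.integral_of_hasDerivAt_of_tendsto hderiv hint hbot
    (aux_tendsto_mul_exp hb)
  rw [MeasureTheory.integral_sub (integrable_exp_neg_mul_sq hb)
    ((aux_integrable_sq_exp hb).const_mul _), integral_const_mul,
    integral_gaussian] at key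
  have h2b : (2*b : ℝ) ≠ 0 := by positivity
  rw [sub_zero, sub_eq_zero] at key
  rw [key, ← mul_assoc, inv_mul_cancel₀ h2b, one_mul]


-- transfer to gaussianReal
lemma aux_gaussian_integral {v : ℝ≥0} (hv : v ≠ 0) (g : ℝ → ℝ) :
    ∫ x, g x ∂(gaussianReal 0 v) = ∫ x, gaussianPDFReal 0 v x * g x := by
  rw [gaussianReal_of_var_ne_zero _ hv]
  have h : gaussianPDF 0 v = fun x => ((gaussianPDFReal 0 v x).toNNReal : ENNReal) := rfl
  rw [h, integral_withDensity_eq_integral_smul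
    ((measurable_gaussianPDFReal 0 v).real_toNNReal)]
  congr with y
  simp [NNReal.smul_def, Real.coe_toNNReal _ (gaussianPDFReal_nonneg 0 v y)]

lemma aux_gaussian_integrable {v : ℝ≥0} (hv : v ≠ 0) (g : ℝ → ℝ)
    (h : Integrable (fun x => gaussianPDFReal 0 v x * g x)) :
    Integrable g (gaussianReal 0 v) := by
  rw [gaussianReal_of_var_ne_zero _ hv]
  have heq : gaussianPDF 0 v = fun x => ((gaussianPDFReal 0 v x).toNNReal : ENNReal) := rfl
  rw [heq, integrable_withDensity_iff_integrable_smul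
    ((measurable_gaussianPDFReal 0 v).real_toNNReal)]
  refine h.congr ?_
  filter_upwards with y
  simp [NNReal.smul_def, Real.coe_toNNReal _ (gaussianPDFReal_nonneg 0 v y)]

lemma aux_pdf_eq {v : ℝ≥0} (hv : v ≠ 0) (y : ℝ) :
    gaussianPDFReal 0 v y = (√(2 * π * v))⁻¹ * rexp (-(2 * (v:ℝ))⁻¹ * y ^ 2) := by
  rw [gaussianPDFReal]
  have hv' : (0:ℝ) < v := lt_of_le_of_ne v.2 (by exact_mod_cast (Ne.symm hv))
  congr 2
  rw [sub_zero]
  field_simp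

section Moments

variable {v : ℝ≥0}

lemma aux_vpos (hv : v ≠ 0) : (0:ℝ) < v := lt_of_le_of_ne v.2 (by exact_mod_cast (Ne.symm hv))

lemma aux_bpos (hv : v ≠ 0) : (0:ℝ) < (2 * (v:ℝ))⁻¹ := by
  have := aux_vpos hv; positivity

lemma aux_integrable_id (hv : v ≠ 0) : Integrable (fun x : ℝ => x) (gaussianReal 0 v) := by
  refine aux_gaussian_integrable hv _ ?_
  have h : (fun x : ℝ => gaussianPDFReal 0 v x * x)
      = fun x => (√(2 * π * v))⁻¹ * (x * rexp (-(2 * (v:ℝ))⁻¹ * x ^ 2)) := by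
    funext y; rw [aux_pdf_eq hv]; ring
  rw [h]
  exact (integrable_mul_exp_neg_mul_sq (aux_bpos hv)).const_mul _

lemma aux_integrable_sq (hv : v ≠ 0) : Integrable (fun x : ℝ => x ^ 2) (gaussianReal 0 v) := by
  refine aux_gaussian_integrable hv _ ?_
  have h : (fun x : ℝ => gaussianPDFReal 0 v x * x ^ 2)
      = fun x => (√(2 * π * v))⁻¹ * (x ^ 2 * rexp (-(2 * (v:ℝ))⁻¹ * x ^ 2)) := by
    funext y; rw [aux_pdf_eq hv]; ring
  rw [h]
  exact (aux_integrable_sq_exp (aux_bpos hv)).const_mul _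

lemma aux_moment_one (hv : v ≠ 0) : ∫ x, x ∂(gaussianReal 0 v) = 0 := by
  rw [aux_gaussian_integral hv]
  have h : (fun x : ℝ => gaussianPDFReal 0 v x * x)
      = fun x => (√(2 * π * v))⁻¹ * (x * rexp (-(2 * (v:ℝ))⁻¹ * x ^ 2)) := by
    funext y; rw [aux_pdf_eq hv]; ring
  rw [h, integral_const_mul, aux_int_odd (aux_bpos hv), mul_zero]

lemma aux_moment_sq (hv : v ≠ 0) : ∫ x, x ^ 2 ∂(gaussianReal 0 v) = v := by
  rw [aux_gaussian_integral hv]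
  have h : (fun x : ℝ => gaussianPDFReal 0 v x * x ^ 2)
      = fun x => (√(2 * π * v))⁻¹ * (x ^ 2 * rexp (-(2 * (v:ℝ))⁻¹ * x ^ 2)) := by
    funext y; rw [aux_pdf_eq hv]; ring
  rw [h, integral_const_mul, aux_int_sq (aux_bpos hv)]
  have hv' := aux_vpos hv
  have h1 : (2 * (2 * (v:ℝ))⁻¹)⁻¹ = (v:ℝ) := by field_simp
  have h2 : Real.pi / (2 * (v:ℝ))⁻¹ = 2 * π * v := by field_simp
  rw [h1, h2]
  have h3 : (0:ℝ) < √(2 * π * v) := Real.sqrt_pos.mpr (by positivity)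
  field_simp

end Moments

-- product measure lemmas
lemma aux_pi_integral {ι : Type*} [Fintype ι] (μ : Measure ℝ) [IsProbabilityMeasure μ]
    (f : ι → ℝ → ℝ) :
    ∫ w : ι → ℝ, ∏ i, f i (w i) ∂(Measure.pi fun _ => μ) = ∏ i, ∫ x, f i x ∂μ := by
  letI : MeasureSpace ℝ := ⟨μ⟩
  haveI : SigmaFinite (volume : Measure ℝ) := inferInstanceAs (SigmaFinite μ)
  exact MeasureTheory.integral_fintype_prod_eq_prod f

lemma aux_pi_integrable {ι : Type*} [Fintype ι] (μ : Measure ℝ) [IsProbabilityMeasure μ]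
    (f : ι → ℝ → ℝ) (hf : ∀ i, Integrable (f i) μ) :
    Integrable (fun w : ι → ℝ => ∏ i, f i (w i)) (Measure.pi fun _ => μ) := by
  letI : MeasureSpace ℝ := ⟨μ⟩
  haveI : SigmaFinite (volume : Measure ℝ) := inferInstanceAs (SigmaFinite μ)
  exact MeasureTheory.Integrable.fintype_prod (f := f) hf

instance aux_inst (β : ℝ) : IsProbabilityMeasure (gaussianReal 0 (⟨β ^ 2, sq_nonneg β⟩ : ℝ≥0)) :=
  instIsProbabilityMeasureGaussianReal _ _

section Main

variable {d : ℕ} {β : ℝ}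

lemma aux_hV (hβ : 0 < β) : (⟨β ^ 2, sq_nonneg β⟩ : ℝ≥0) ≠ 0 := by
  intro h
  have : ((⟨β ^ 2, sq_nonneg β⟩ : ℝ≥0) : ℝ) = 0 := by rw [h]; simp
  exact (pow_ne_zero 2 hβ.ne') this

lemma aux_fk_integrable (hβ : 0 < β) (i j k : Fin d) :
    Integrable (fun t : ℝ => (if k = i then t else 1) * (if k = j then t else 1))
      (gaussianReal 0 ⟨β ^ 2, sq_nonneg β⟩) := by
  by_cases hi : k = i
  · by_cases hj : k = j
    · simp only [if_pos hi, if_pos hj]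
      have h : (fun t : ℝ => t * t) = fun t : ℝ => t ^ 2 := by funext t; ring
      rw [h]; exact aux_integrable_sq (aux_hV hβ)
    · simp only [if_pos hi, if_neg hj, mul_one]
      exact aux_integrable_id (aux_hV hβ)
  · by_cases hj : k = j
    · simp only [if_neg hi, if_pos hj, one_mul]
      exact aux_integrable_id (aux_hV hβ)
    · simp only [if_neg hi, if_neg hj, one_mul]
      exact integrable_const 1

lemma aux_fk_integral (hβ : 0 < β) (i j k : Fin d) :
    ∫ t : ℝ, (if k = i then t else 1) * (if k = j then t else 1)
      ∂(gaussianReal 0 ⟨β ^ 2, sq_nonneg β⟩)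
    = if k = i then (if k = j then β ^ 2 else 0) else (if k = j then 0 else 1) := by
  by_cases hi : k = i
  · by_cases hj : k = j
    · simp only [if_pos hi, if_pos hj]
      have h : (fun t : ℝ => t * t) = fun t : ℝ => t ^ 2 := by funext t; ring
      simp_rw [h]
      exact aux_moment_sq (aux_hV hβ)
    · simp only [if_pos hi, if_neg hj, mul_one]
      exact aux_moment_one (aux_hV hβ)
  · by_cases hj : k = j
    · simp only [if_neg hi, if_pos hj, one_mul]
      exact aux_moment_one (aux_hV hβ)
    · simp only [if_neg hi, if_neg hj, one_mul]
      simp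

lemma aux_prod_eq (i j : Fin d) (w : Fin d → ℝ) :
    ∏ k, (if k = i then w k else 1) * (if k = j then w k else 1) = w i * w j := by
  rw [Finset.prod_mul_distrib]
  simp [Finset.prod_ite_eq']

lemma aux_moment_pi (hβ : 0 < β) (i j : Fin d) :
    ∫ w : Fin d → ℝ, w i * w j
      ∂(Measure.pi fun _ : Fin d => gaussianReal 0 ⟨β ^ 2, sq_nonneg β⟩)
    = if i = j then β ^ 2 else 0 := by
  set F : Fin d → ℝ → ℝ :=
    fun k t => (if k = i then t else 1) * (if k = j then t else 1) with hF
  have h : (fun w : Fin d → ℝ => w i * w j) = fun w => ∏ k, F k (w k) := by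
    funext w
    exact (aux_prod_eq i j w).symm
  rw [h, aux_pi_integral _ F]
  rw [Finset.prod_congr rfl (fun k _ => aux_fk_integral hβ i j k)]
  by_cases hij : i = j
  · subst hij
    rw [if_pos rfl]
    rw [Finset.prod_eq_single i (fun k _ hk => by simp [hk]) (by simp)]
    simp
  · rw [if_neg hij]
    refine Finset.prod_eq_zero (Finset.mem_univ i) ?_
    simp [Ne.symm, hij]

lemma aux_integrable_pair (hβ : 0 < β) (i j : Fin d) :
    Integrable (fun w : Fin d → ℝ => w i * w j)
      (Measure.pi fun _ : Fin d => gaussianReal 0 ⟨β ^ 2, sq_nonneg β⟩) := by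
  set F : Fin d → ℝ → ℝ :=
    fun k t => (if k = i then t else 1) * (if k = j then t else 1) with hF
  have h : (fun w : Fin d → ℝ => w i * w j) = fun w => ∏ k, F k (w k) := by
    funext w
    exact (aux_prod_eq i j w).symm
  rw [h]
  exact aux_pi_integrable _ F (aux_fk_integrable hβ i j)

end Main

lemma aux_gaussian_neg (V : ℝ≥0) :
    (gaussianReal 0 V).map (fun x : ℝ => -x) = gaussianReal 0 V := by
  have h := gaussianReal_map_const_mul (μ := 0) (v := V) (-1)
  have h1 : (fun x : ℝ => -1 * x) = fun x : ℝ => -x := by funext y; ring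
  have h2 : (⟨(-1:ℝ)^2, sq_nonneg _⟩ : ℝ≥0) = 1 := by
    ext; norm_num
  have := gaussianReal_map_neg (μ := 0) (v := V)
  simpa using this

lemma aux_pi_neg (V : ℝ≥0) [IsProbabilityMeasure (gaussianReal 0 V)] :
    MeasurePreserving (fun w : Fin d → ℝ => -w)
      (Measure.pi fun _ : Fin d => gaussianReal 0 V)
      (Measure.pi fun _ : Fin d => gaussianReal 0 V) := by
  refine ⟨measurable_neg, ?_⟩
  refine (Measure.pi_eq (μ := fun _ : Fin d => gaussianReal 0 V) fun s hs => ?_).symm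
  rw [Measure.map_apply measurable_neg (MeasurableSet.univ_pi hs)]
  have hpre : (fun w : Fin d → ℝ => -w) ⁻¹' (Set.univ.pi s)
      = Set.univ.pi fun i => (fun t : ℝ => -t) ⁻¹' s i := by
    ext w
    simp [Set.mem_pi]
  rw [hpre, Measure.pi_pi]
  refine Finset.prod_congr rfl fun i _ => ?_
  rw [← Measure.map_apply measurable_neg (hs i), aux_gaussian_neg]

/-- For the Gaussian measure N(0, β²I) on ℝ^d and ReLU σ:
    ∫ (wᵀv)σ(wᵀx) dμ_d^β(w) = (β²/2) vᵀx. -/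
theorem stmt_1 (d : ℕ) (β : ℝ) (hβ : 0 < β) (v x : Fin d → ℝ) :
    ∫ w : Fin d → ℝ, (∑ i, w i * v i) * max (∑ i, w i * x i) 0
      ∂(Measure.pi fun _ : Fin d => gaussianReal 0 ⟨β ^ 2, sq_nonneg β⟩)
    = (β ^ 2 / 2) * ∑ i, v i * x i := by
  set μ := Measure.pi fun _ : Fin d => gaussianReal 0 (⟨β ^ 2, sq_nonneg β⟩ : ℝ≥0) with hμ
  set f : (Fin d → ℝ) → ℝ :=
    fun w => (∑ i, w i * v i) * max (∑ i, w i * x i) 0 with hf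
  set g : (Fin d → ℝ) → ℝ :=
    fun w => (∑ i, w i * v i) * (∑ i, w i * x i) with hg
  have hgsum : g = fun w => ∑ i, ∑ j, (v i * x j) * (w i * w j) := by
    funext w
    simp only [hg]
    rw [Finset.sum_mul_sum]
    refine Finset.sum_congr rfl fun i _ => Finset.sum_congr rfl fun j _ => by ring
  have hg_int : Integrable g μ := by
    rw [hgsum]
    exact integrable_finset_sum _ fun i _ =>
      integrable_finset_sum _ fun j _ => (aux_integrable_pair hβ i j).const_mul _
  have hg_val : ∫ w, g w ∂μ = β ^ 2 * ∑ i, v i * x i := by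
    rw [hgsum, integral_finset_sum _ (fun i _ =>
      integrable_finset_sum _ fun j _ => (aux_integrable_pair hβ i j).const_mul _)]
    have h1 : ∀ i : Fin d, ∫ w, ∑ j, (v i * x j) * (w i * w j) ∂μ = v i * x i * β ^ 2 := by
      intro i
      rw [integral_finset_sum _ (fun j _ => (aux_integrable_pair hβ i j).const_mul _)]
      have h2 : ∀ j : Fin d, ∫ w, (v i * x j) * (w i * w j) ∂μ
          = if i = j then v i * x j * β ^ 2 else 0 := by
        intro j
        rw [integral_const_mul, aux_moment_pi hβ i j]
        by_cases hij : i = j <;> simp [hij]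
      rw [Finset.sum_congr rfl fun j _ => h2 j]
      simp
    rw [Finset.sum_congr rfl fun i _ => h1 i, Finset.mul_sum]
    exact Finset.sum_congr rfl fun i _ => by ring
  have hmax_le : ∀ s t : ℝ, |s * max t 0| ≤ |s * t| := by
    intro s t
    rw [abs_mul, abs_mul]
    refine mul_le_mul_of_nonneg_left ?_ (abs_nonneg s)
    rw [abs_of_nonneg (le_max_right t 0)]
    exact max_le (le_abs_self t) (abs_nonneg t)
  have hf_cont : Continuous f := by
    refine Continuous.mul ?_ (Continuous.max ?_ continuous_const) <;>
      exact continuous_finset_sum _ fun i _ => (continuous_apply i).mul continuous_const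
  have hf_int : Integrable f μ :=
    hg_int.mono hf_cont.aestronglyMeasurable
      (Filter.Eventually.of_forall fun w => by
        simpa [Real.norm_eq_abs, hf, hg] using hmax_le (∑ i, w i * v i) (∑ i, w i * x i))
  have hfneg_eq : ∀ w : Fin d → ℝ,
      f (-w) = -(∑ i, w i * v i) * max (-(∑ i, w i * x i)) 0 := by
    intro w
    rw [hf]
    simp [neg_mul, Finset.sum_neg_distrib]
  have hfneg_int : Integrable (fun w => f (-w)) μ := by
    refine hg_int.mono (hf_cont.comp continuous_neg).aestronglyMeasurable
      (Filter.Eventually.of_forall fun w => ?_)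
    have h1 := hmax_le (-(∑ i, w i * v i)) (-(∑ i, w i * x i))
    rw [neg_mul_neg] at h1
    simp only [Real.norm_eq_abs, hfneg_eq w, hg]
    exact h1
  have hcomp : ∫ w, f (-w) ∂μ = ∫ w, f w ∂μ :=
    (aux_pi_neg _).integral_comp (Homeomorph.neg (Fin d → ℝ)).measurableEmbedding f
  have key : (∫ w, f (-w) ∂μ) + ∫ w, f w ∂μ = β ^ 2 * ∑ i, v i * x i := by
    rw [← integral_add hfneg_int hf_int, ← hg_val]
    refine integral_congr_ae (Filter.Eventually.of_forall fun w => ?_)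
    show f (-w) + f w = g w
    rw [hfneg_eq w]
    simp only [hf, hg]
    set s := ∑ i, w i * v i
    set t := ∑ i, w i * x i
    calc -s * max (-t) 0 + s * max t 0 = s * (max t 0 - max (-t) 0) := by ring
      _ = s * t := by rw [max_zero_sub_max_neg_zero_eq_self]
  show ∫ w, f w ∂μ = (β ^ 2 / 2) * ∑ i, v i * x i
  linarith [key, hcomp]
end
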